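/- Let X be a (K,L)-quasi-geodesic metric space, Y ⊆ X, and suppose Y is (A,D)-contracting. Then Y is Q-strongly quasiconvex, where the gauge Q is determined by A, D, K, and L. That is, for every λ ≥ 1, ε ≥ 0 there is a bound Q(λ,ε) depending only on A, D, K, L, λ, ε such that every (λ,ε)-quasi-geodesic with endpoints on Y is contained in the Q(λ,ε)-neighborhood of Y. -/

import Mathlib

set_option maxHeartbeats 1000000

open Metric

/-- A map is `(D,D)`-coarsely Lipschitz. -/
def CoarseLipschitz {X : Type*} [MetricSpace X] (D : ℝ) (g : X → X) : Prop :=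
  ∀ x y : X, dist (g x) (g y) ≤ D * dist x y + D

/-- `g : X → Y` is `(A,D)`-contracting. -/
def ContractingMap {X : Type*} [MetricSpace X] (A D : ℝ) (Y : Set X) (g : X → X) : Prop :=
  (∀ x, g x ∈ Y) ∧ CoarseLipschitz D g ∧ (∀ y ∈ Y, dist y (g y) ≤ D) ∧
  (∀ x x₁ x₂ : X, dist x x₁ ≤ A * infDist x Y → dist x x₂ ≤ A * infDist x Y →
    dist (g x₁) (g x₂) ≤ D)

/-- `(K,L)`-quasi-geodesic on `[a,b]`. -/
def QuasiGeodesicOn {X : Type*} [MetricSpace X] (K L : ℝ) (γ : ℝ → X) (a b : ℝ) : Prop :=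
  ∀ s ∈ Set.Icc a b, ∀ t ∈ Set.Icc a b,
    (1 / K) * |s - t| - L ≤ dist (γ s) (γ t) ∧ dist (γ s) (γ t) ≤ K * |s - t| + L

/-- `X` is a `(K,L)`-quasi-geodesic metric space. -/
def IsQuasiGeodesicSpace (X : Type*) [MetricSpace X] (K L : ℝ) : Prop :=
  ∀ x y : X, ∃ (γ : ℝ → X) (a b : ℝ), a ≤ b ∧ QuasiGeodesicOn K L γ a b ∧ γ a = x ∧ γ b = y

/-- `Y` is strongly quasiconvex with gauge `Q`. -/
def StronglyQuasiconvex {X : Type*} [MetricSpace X] (Q : ℝ → ℝ → ℝ) (Y : Set X) : Prop :=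
  ∀ K L : ℝ, 1 ≤ K → 0 ≤ L → ∀ (γ : ℝ → X) (a b : ℝ), a ≤ b →
    QuasiGeodesicOn K L γ a b → γ a ∈ Y → γ b ∈ Y →
    ∀ t ∈ Set.Icc a b, infDist (γ t) Y ≤ Q K L

/-- The gauge: an explicit bound in terms of the contraction constants `A`, `D` and the
quasi-geodesic constants `l`, `e`. -/
noncomputable def Qaux (A D l e : ℝ) : ℝ :=
  (2*l^2*D + e + 1)/A +
    l*((2*l*(2*((D+1)*((2*l^2*D + e + 1)/A + 1) + 2*D) + D + e)
        + (2*l*D + 1/l) + 2) + 1) + e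

/-- Main estimate: any point of a `(lam,eps)`-quasi-geodesic with endpoints on `Y`
is within `Qaux A D lam eps` of `Y`, provided `Y` admits an `(A,D)`-contracting map. -/
theorem qaux_bound {X : Type} [MetricSpace X] {A D lam eps : ℝ} {Y : Set X} {g : X → X}
    (hA : 0 < A) (hD : 1 ≤ D) (hlam : 1 ≤ lam) (heps : 0 ≤ eps)
    (hgY : ∀ x, g x ∈ Y) (hgLip : CoarseLipschitz D g)
    (hgid : ∀ y ∈ Y, dist y (g y) ≤ D)
    (hgc : ∀ x x₁ x₂ : X, dist x x₁ ≤ A * infDist x Y → dist x x₂ ≤ A * infDist x Y →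
      dist (g x₁) (g x₂) ≤ D)
    {γ : ℝ → X} {a b : ℝ} (hab : a ≤ b) (hγ : QuasiGeodesicOn lam eps γ a b)
    (ha : γ a ∈ Y) (hb : γ b ∈ Y) {t : ℝ} (ht : t ∈ Set.Icc a b) :
    infDist (γ t) Y ≤ Qaux A D lam eps := by
  have hlam0 : 0 < lam := lt_of_lt_of_le one_pos hlam
  have hD0 : 0 < D := lt_of_lt_of_le one_pos hD
  -- abbreviations
  set R0 : ℝ := (2*lam^2*D + eps + 1)/A with hR0def
  set hs : ℝ := 2*lam*D + 1/lam with hhsdef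
  set E : ℝ := (D+1)*(R0 + 1) + 2*D with hEdef
  set M : ℝ := 2*lam*(2*E + D + eps) + hs + 2 with hMdef
  clear_value R0 hs E M
  have hQ : Qaux A D lam eps = R0 + lam*(M+1) + eps := by
    simp only [Qaux, hR0def, hhsdef, hEdef, hMdef]
  rw [hQ]
  -- basic numeric facts
  have hAR : A * R0 = 2*lam^2*D + eps + 1 := by
    rw [hR0def]; field_simp
  have hl2D0 : 0 ≤ lam^2*D :=
    mul_nonneg (sq_nonneg lam) (by linarith only [hD] : (0:ℝ) ≤ D)
  have hR0pos : 0 < R0 := by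
    rw [hR0def]
    exact div_pos (by linarith only [hl2D0, heps]) hA
  have hinv : (1/lam) * lam = 1 := by field_simp
  have hinvpos : 0 < 1/lam := by positivity
  have hlh : lam * hs + eps = A * R0 := by
    rw [hAR, hhsdef]; field_simp; ring
  have hld : (1:ℝ) ≤ lam*D := by nlinarith only [hlam, hD]
  have hs2 : 2 ≤ hs := by rw [hhsdef]; linarith only [hld, hinvpos]
  have h2lD : 2*lam*D ≤ hs := by rw [hhsdef]; linarith only [hinvpos]
  have hE0 : 0 < E := by
    have h1 : (0:ℝ) < (D+1)*(R0+1) :=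
      mul_pos (by linarith only [hD0]) (by linarith only [hR0pos])
    rw [hEdef]; linarith only [h1, hD0]
  have hM0 : 0 < M := by
    have h1 : (0:ℝ) ≤ lam*(2*E + D + eps) :=
      mul_nonneg hlam0.le (by linarith only [hE0, hD0, heps])
    rw [hMdef]; linarith only [h1, hs2]
  -- distance estimates along γ
  have hdist : ∀ s ∈ Set.Icc a b, ∀ s' ∈ Set.Icc a b,
      dist (γ s) (γ s') ≤ lam*|s - s'| + eps := fun s hs1 s' hs2 => (hγ s hs1 s' hs2).2
  have flip : ∀ s ∈ Set.Icc a b, ∀ s' ∈ Set.Icc a b,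
      infDist (γ s) Y ≤ infDist (γ s') Y + (lam*|s - s'| + eps) := by
    intro s hs1 s' hs2
    exact le_trans infDist_le_infDist_add_dist (add_le_add le_rfl (hdist s hs1 s' hs2))
  by_contra hcon
  push_neg at hcon
  obtain ⟨hat, htb⟩ := ht
  have hfa : infDist (γ a) Y = 0 := infDist_zero_of_mem ha
  have hfb : infDist (γ b) Y = 0 := infDist_zero_of_mem hb
  -- t is far from both endpoints
  have hta : M + 1 < t - a := by
    have h1 := flip t ⟨hat, htb⟩ a ⟨le_refl a, hab⟩
    rw [hfa, abs_of_nonneg (by linarith only [hat] : (0:ℝ) ≤ t - a)] at h1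
    have h2 : lam*(M+1) < lam*(t-a) := by linarith only [h1, hcon, hR0pos]
    exact lt_of_mul_lt_mul_left h2 hlam0.le
  have htbM : M + 1 < b - t := by
    have h1 := flip t ⟨hat, htb⟩ b ⟨hab, le_refl b⟩
    rw [hfb, abs_of_nonpos (by linarith only [htb] : t - b ≤ 0)] at h1
    have h2 : lam*(M+1) < lam*(b-t) := by
      have h3 : -(t-b) = b - t := by ring
      rw [h3] at h1
      linarith only [h1, hcon, hR0pos]
    exact lt_of_mul_lt_mul_left h2 hlam0.le
  -- points with small infDist are parameter-far from t
  have hfar : ∀ s ∈ Set.Icc a b, infDist (γ s) Y ≤ R0 → M + 1 < |s - t| := by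
    intro s hsI hsf
    by_contra hcon2
    push_neg at hcon2
    have h1 := flip t ⟨hat, htb⟩ s hsI
    rw [abs_sub_comm] at h1
    have h3 : lam*|s-t| ≤ lam*(M+1) := mul_le_mul_of_nonneg_left hcon2 hlam0.le
    linarith only [h1, hsf, h3, hcon]
  -- left excursion endpoint
  have hTset : ∀ s ∈ Set.Icc a t, s ∈ Set.Icc a b := fun s hs =>
    ⟨hs.1, le_trans hs.2 htb⟩
  have hVset : ∀ s ∈ Set.Icc t b, s ∈ Set.Icc a b := fun s hs =>
    ⟨le_trans hat hs.1, hs.2⟩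
  set T : Set ℝ := {s | s ∈ Set.Icc a t ∧ infDist (γ s) Y ≤ R0} with hTdef
  have haT : a ∈ T := ⟨⟨le_refl a, hat⟩, by rw [hfa]; exact hR0pos.le⟩
  have hTne : T.Nonempty := ⟨a, haT⟩
  have hTbdd : BddAbove T := ⟨t, fun s hsT => hsT.1.2⟩
  set u : ℝ := sSup T with hudef
  have hau : a ≤ u := le_csSup hTbdd haT
  have hut : u ≤ t := csSup_le hTne (fun s hsT => hsT.1.2)
  have huM : u ≤ t - (M+1) := by
    apply csSup_le hTne
    intro s hsT
    have h1 := hfar s (hTset s hsT.1) hsT.2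
    rw [abs_sub_comm, abs_of_nonneg (by linarith only [hsT.1.2] : (0:ℝ) ≤ t - s)] at h1
    linarith only [h1]
  have hleft : ∀ s, u < s → s ≤ t → R0 < infDist (γ s) Y := by
    intro s h1 h2
    by_contra hcon2
    push_neg at hcon2
    exact absurd (le_csSup hTbdd ⟨⟨le_trans hau h1.le, h2⟩, hcon2⟩) (not_le.mpr h1)
  obtain ⟨u', hu'T, hu'⟩ : ∃ u' ∈ T, u - 1/2 < u' :=
    exists_lt_of_lt_csSup hTne (by linarith only)
  have hu'le : u' ≤ u := le_csSup hTbdd hu'T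
  clear_value u
  -- right excursion endpoint
  set V : Set ℝ := {s | s ∈ Set.Icc t b ∧ infDist (γ s) Y ≤ R0} with hVdef
  have hbV : b ∈ V := ⟨⟨htb, le_refl b⟩, by rw [hfb]; exact hR0pos.le⟩
  have hVne : V.Nonempty := ⟨b, hbV⟩
  have hVbdd : BddBelow V := ⟨t, fun s hsV => hsV.1.1⟩
  set v : ℝ := sInf V with hvdef
  have htv : t ≤ v := le_csInf hVne (fun s hsV => hsV.1.1)
  have hvb : v ≤ b := csInf_le hVbdd hbV
  have hvM : t + (M+1) ≤ v := by
    apply le_csInf hVne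
    intro s hsV
    have h1 := hfar s (hVset s hsV.1) hsV.2
    rw [abs_of_nonneg (by linarith only [hsV.1.1] : (0:ℝ) ≤ s - t)] at h1
    linarith only [h1]
  have hright : ∀ s, t ≤ s → s < v → R0 < infDist (γ s) Y := by
    intro s h1 h2
    by_contra hcon2
    push_neg at hcon2
    exact absurd (csInf_le hVbdd ⟨⟨h1, le_trans h2.le hvb⟩, hcon2⟩) (not_le.mpr h2)
  obtain ⟨v', hv'V, hv'⟩ : ∃ v' ∈ V, v' < v + 1/2 :=
    exists_lt_of_csInf_lt hVne (by linarith only)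
  have hv'ge : v ≤ v' := csInf_le hVbdd hv'V
  clear_value v
  -- the excursion length
  set x : ℝ := v' - u' with hxdef
  clear_value x
  have hxM : 2*(M+1) ≤ x := by
    rw [hxdef]; linarith only [hu'le, hv'ge, hvM, huM]
  have hMhs : hs + 2 ≤ M := by
    have h1 : (0:ℝ) ≤ lam*(2*E + D + eps) :=
      mul_nonneg hlam0.le (by linarith only [hE0, hD0, heps])
    rw [hMdef]; linarith only [h1]
  have hxhs : 2*hs ≤ x := by linarith only [hxM, hMhs]
  have hx0 : 0 < x := by linarith only [hxM, hM0]
  have hhs0 : 0 < hs := by linarith only [hs2]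
  have hx4 : 4 ≤ x := by linarith only [hxM, hMhs, hs2]
  -- the discretization
  set N : ℕ := ⌈x/hs⌉₊ with hNdef
  clear_value N
  have hN2 : x/hs ≤ (N:ℝ) := by rw [hNdef]; exact Nat.le_ceil _
  have hN1 : (N:ℝ) < x/hs + 1 := by
    rw [hNdef]; exact Nat.ceil_lt_add_one (div_nonneg hx0.le hhs0.le)
  have hNge2 : 2 ≤ N := by
    have h1 : ((1:ℕ):ℝ) < x/hs := by
      rw [lt_div_iff₀ hhs0]; push_cast; linarith only [hxhs, hhs0]
    have h2 : 1 < ⌈x/hs⌉₊ := Nat.lt_ceil.mpr h1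
    omega
  have hN0 : 0 < (N:ℝ) := by
    have h : (0:ℕ) < N := by omega
    exact_mod_cast h
  set δ : ℝ := x / N with hδdef
  clear_value δ
  have hNne : (N:ℝ) ≠ 0 := ne_of_gt hN0
  have hδ0 : 0 < δ := by rw [hδdef]; exact div_pos hx0 hN0
  have hδN : (N:ℝ) * δ = x := by
    rw [hδdef]; field_simp
  have hδh : δ ≤ hs := by
    rw [hδdef, div_le_iff₀ hN0]
    have h1 : hs * (x/hs) = x := mul_div_cancel₀ _ (ne_of_gt hhs0)
    have h2 : hs*(x/hs) ≤ hs*(N:ℝ) := mul_le_mul_of_nonneg_left hN2 hhs0.le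
    linarith only [h1, h2]
  have hδlb : 4/3 ≤ δ := by
    rw [hδdef, le_div_iff₀ hN0]
    have hxh2 : x/hs ≤ x/2 := by
      apply div_le_div_of_nonneg_left hx0.le two_pos hs2
    linarith only [hN1, hxh2, hx4]
  have hsN : u' + (N:ℝ)*δ = v' := by rw [hδN, hxdef]; ring
  -- grid points lie in [a,b]
  have hu'a : a ≤ u' := hu'T.1.1
  have hu't : u' ≤ t := hu'T.1.2
  have htv' : t ≤ v' := hv'V.1.1
  have hv'b : v' ≤ b := hv'V.1.2
  have hmem : ∀ i : ℕ, i ≤ N → u' + (i:ℝ)*δ ∈ Set.Icc a b := by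
    intro i hi
    have hiN : (i:ℝ) ≤ (N:ℝ) := by exact_mod_cast hi
    have h1 : 0 ≤ (i:ℝ)*δ := mul_nonneg (Nat.cast_nonneg i) hδ0.le
    have h2 : (i:ℝ)*δ ≤ (N:ℝ)*δ := mul_le_mul_of_nonneg_right hiN hδ0.le
    exact ⟨by linarith only [h1, hu'a], by linarith only [h2, hsN, hv'b]⟩
  -- interior grid points are far from Y
  have hinterior : ∀ i : ℕ, 1 ≤ i → i < N → R0 < infDist (γ (u' + (i:ℝ)*δ)) Y := by
    intro i h1 h2
    have hi1 : (1:ℝ) ≤ (i:ℝ) := by exact_mod_cast h1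
    have hiN : (i:ℝ) + 1 ≤ (N:ℝ) := by exact_mod_cast h2
    have hd1 : 1*δ ≤ (i:ℝ)*δ := mul_le_mul_of_nonneg_right hi1 hδ0.le
    have hd2 : (i:ℝ)*δ ≤ ((N:ℝ)-1)*δ :=
      mul_le_mul_of_nonneg_right (by linarith only [hiN]) hδ0.le
    have hus : u < u' + (i:ℝ)*δ := by linarith only [hu', hδlb, hd1]
    have hsv : u' + (i:ℝ)*δ < v := by linarith only [hv', hδlb, hd2, hsN, hv'ge]
    rcases le_total (u' + (i:ℝ)*δ) t with h | h
    · exact hleft _ hus h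
    · exact hright _ h hsv
  -- one contraction step
  have hstep : ∀ c i i' : ℕ, 1 ≤ c → c < N → i ≤ N → i' ≤ N →
      |(i:ℝ) - (c:ℝ)| ≤ 1 → |(i':ℝ) - (c:ℝ)| ≤ 1 →
      dist (g (γ (u' + (i:ℝ)*δ))) (g (γ (u' + (i':ℝ)*δ))) ≤ D := by
    intro c i i' hc1 hcN hiN hi'N hic hi'c
    have hfc := hinterior c hc1 hcN
    have hkey : ∀ k : ℕ, k ≤ N → |(k:ℝ) - (c:ℝ)| ≤ 1 →
        dist (γ (u' + (c:ℝ)*δ)) (γ (u' + (k:ℝ)*δ)) ≤ A * infDist (γ (u' + (c:ℝ)*δ)) Y := by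
      intro k hk hkc
      have hd := hdist _ (hmem c hcN.le) _ (hmem k hk)
      have habs : |(u' + (c:ℝ)*δ) - (u' + (k:ℝ)*δ)| ≤ δ := by
        have h1 : (u' + (c:ℝ)*δ) - (u' + (k:ℝ)*δ) = ((c:ℝ) - (k:ℝ))*δ := by ring
        rw [h1, abs_mul, abs_of_nonneg hδ0.le]
        have h2 : |(c:ℝ) - (k:ℝ)| ≤ 1 := by rwa [abs_sub_comm] at hkc
        have h3 := mul_le_mul_of_nonneg_right h2 hδ0.le
        linarith only [h3]
      have h3 : lam*|(u' + (c:ℝ)*δ) - (u' + (k:ℝ)*δ)| ≤ lam*hs :=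
        mul_le_mul_of_nonneg_left (le_trans habs hδh) hlam0.le
      have h4 : A*R0 ≤ A * infDist (γ (u' + (c:ℝ)*δ)) Y :=
        mul_le_mul_of_nonneg_left hfc.le hA.le
      linarith only [hd, h3, h4, hlh]
    exact hgc _ _ _ (hkey i hiN hic) (hkey i' hi'N hi'c)
  -- the chain estimate
  have hchain : ∀ j : ℕ, j ≤ N →
      dist (g (γ u')) (g (γ (u' + (j:ℝ)*δ))) ≤ (j:ℝ) * D := by
    intro j
    induction j with
    | zero => intro _; simp
    | succ j ih =>
      intro hj
      have hj' : j ≤ N := Nat.le_of_succ_le hj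
      have hstep1 : dist (g (γ (u' + (j:ℝ)*δ))) (g (γ (u' + ((j+1:ℕ):ℝ)*δ))) ≤ D := by
        rcases Nat.eq_zero_or_pos j with h0 | hpos
        · subst h0
          have := hstep 1 0 1 le_rfl (by omega) (by omega) (by omega)
            (by norm_num) (by norm_num)
          simpa using this
        · apply hstep j j (j+1) hpos (by omega) hj' hj
          · simp
          · push_cast
            rw [show ((j:ℝ) + 1 - (j:ℝ)) = 1 by ring]
            norm_num
      have htr := dist_triangle (g (γ u')) (g (γ (u' + (j:ℝ)*δ)))
        (g (γ (u' + ((j+1:ℕ):ℝ)*δ)))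
      have hih := ih hj'
      have goal2 : dist (g (γ u')) (g (γ (u' + ((j+1:ℕ):ℝ)*δ))) ≤ ((j+1:ℕ):ℝ) * D := by
        push_cast
        push_cast at htr hih hstep1
        linarith only [htr, hih, hstep1]
      exact goal2
  -- projection of points near Y
  have hYne : Y.Nonempty := ⟨γ a, ha⟩
  have hproj : ∀ w ∈ Set.Icc a b, infDist (γ w) Y ≤ R0 → dist (γ w) (g (γ w)) ≤ E := by
    intro w hw hwR
    obtain ⟨y, hy, hyd⟩ : ∃ y ∈ Y, dist (γ w) y < R0 + 1 :=
      (infDist_lt_iff hYne).mp (lt_of_le_of_lt hwR (lt_add_one R0))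
    have h1 := hgid y hy
    have h2 := hgLip y (γ w)
    have h3 : dist y (γ w) = dist (γ w) y := dist_comm _ _
    have h4 := dist_triangle4 (γ w) y (g y) (g (γ w))
    have h5 : D * dist y (γ w) ≤ D*(R0+1) := by
      rw [h3]; exact mul_le_mul_of_nonneg_left hyd.le hD0.le
    rw [hEdef]
    linarith only [h1, h2, h4, h5, hyd, hD0]
  -- assemble
  have hchainN : dist (g (γ u')) (g (γ v')) ≤ (N:ℝ) * D := by
    have h := hchain N le_rfl
    rwa [hsN] at h
  have hendu : dist (γ u') (g (γ u')) ≤ E := hproj u' (hTset u' hu'T.1) hu'T.2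
  have hendv : dist (γ v') (g (γ v')) ≤ E := hproj v' (hVset v' hv'V.1) hv'V.2
  have hIu' : u' ∈ Set.Icc a b := hTset u' hu'T.1
  have hIv' : v' ∈ Set.Icc a b := hVset v' hv'V.1
  have hlower := (hγ u' hIu' v' hIv').1
  have habsx : |u' - v'| = x := by
    rw [abs_sub_comm, abs_of_nonneg (by linarith only [hx0, hxdef] : (0:ℝ) ≤ v' - u'), hxdef]
  rw [habsx] at hlower
  have htri : dist (γ u') (γ v') ≤ E + (N:ℝ)*D + E := by
    have h4 := dist_triangle4 (γ u') (g (γ u')) (g (γ v')) (γ v')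
    have h5 : dist (g (γ v')) (γ v') = dist (γ v') (g (γ v')) := dist_comm _ _
    linarith only [h4, h5, hendu, hendv, hchainN]
  -- final contradiction
  have F1 : (1/lam)*x - eps ≤ 2*E + (N:ℝ)*D := by linarith only [hlower, htri]
  have F2 : hs*(N:ℝ) ≤ x + hs := by
    have h1 : hs * (x/hs) = x := mul_div_cancel₀ _ (ne_of_gt hhs0)
    have h2 : hs*(N:ℝ) ≤ hs*(x/hs + 1) := mul_le_mul_of_nonneg_left hN1.le hhs0.le
    have h3 : hs*(x/hs + 1) = hs*(x/hs) + hs := by ring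
    linarith only [h1, h2, h3]
  have s2 : x - lam*eps ≤ lam*(2*E + (N:ℝ)*D) := by
    have h1 := mul_le_mul_of_nonneg_right F1 hlam0.le
    have h2 : ((1/lam)*x - eps)*lam = x*((1/lam)*lam) - eps*lam := by ring
    rw [h2, hinv] at h1
    linarith only [h1]
  have s3 : lam*((N:ℝ)*D)*hs ≤ lam*((x + hs)*D) := by
    have hND : hs*(N:ℝ)*D ≤ (x+hs)*D := mul_le_mul_of_nonneg_right F2 hD0.le
    have := mul_le_mul_of_nonneg_left hND hlam0.le
    linarith only [this]
  have s4 : lam*((x+hs)*D) ≤ (hs/2)*x + (hs/2)*hs := by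
    have h1 : (0:ℝ) ≤ (x+hs)/2 := by linarith only [hx0, hhs0]
    have h2 := mul_le_mul_of_nonneg_right h2lD h1
    linarith only [h2]
  have s5 : x*hs - lam*eps*hs ≤ lam*(2*E)*hs + (hs/2)*x + (hs/2)*hs := by
    have h1 := mul_le_mul_of_nonneg_right s2 hhs0.le
    linarith only [h1, s3, s4]
  have s6 : (hs/2)*x ≤ (hs/2)*(2*lam*eps + 4*lam*E + hs) := by
    linarith only [s5]
  have s7 : x ≤ 2*lam*eps + 4*lam*E + hs :=
    le_of_mul_le_mul_left s6 (by linarith only [hhs0] : (0:ℝ) < hs/2)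
  have p1 : 0 ≤ lam*E := mul_nonneg hlam0.le hE0.le
  have p2 : 0 ≤ lam*D := mul_nonneg hlam0.le hD0.le
  have p3 : 0 ≤ lam*eps := mul_nonneg hlam0.le heps
  have hMeq : M = 2*lam*(2*E + D + eps) + hs + 2 := hMdef
  linarith only [s7, hxM, hMeq, p1, p2, p3, hhs0]

theorem contracting_implies_stronglyQuasiconvex (A D K L : ℝ)
    (hA : 0 < A) (hA1 : A ≤ 1) (hD : 1 ≤ D) (hK : 1 ≤ K) (hL : 0 ≤ L) :
    ∃ Q : ℝ → ℝ → ℝ,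
      ∀ (X : Type) [MetricSpace X], IsQuasiGeodesicSpace X K L →
        ∀ Y : Set X, (∃ g : X → X, ContractingMap A D Y g) →
          StronglyQuasiconvex Q Y := by
  refine ⟨fun l e => Qaux A D l e, ?_⟩
  intro X _ _hqg Y hg
  obtain ⟨g, hgY, hgLip, hgid, hgc⟩ := hg
  intro lam eps hlam heps γ a b hab hγ hga hgb t ht
  exact qaux_bound hA hD hlam heps hgY hgLip hgid hgc hab hγ hga hgb ht
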